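/- Let V be a finite set and E : V → V → Prop a directed edge relation that is acyclic (no walk of positive length from any vertex to itself). Define the coverage generating function P_{f,g}(p) = ∑_{n} N_n(f,g)·pⁿ (a finite sum, since in a finite acyclic graph N_n vanishes for large n). Then for all f, h, g ∈ V and all p ∈ [0,1], P_{f,g}(p) ≥ P_{f,h}(p) · P_{h,g}(p). -/

import Mathlib

open scoped BigOperators

/-- A walk of length `n` from `f` to `g` in the directed graph `(V, E)`:
a function `w : Fin (n+1) → V` with `w 0 = f`, `w n = g`, and
`E (w i) (w (i+1))` for all `i < n`. -/
def IsWalk {V : Type*} (E : V → V → Prop) (n : ℕ) (f g : V)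
    (w : Fin (n + 1) → V) : Prop :=
  w 0 = f ∧ w (Fin.last n) = g ∧ ∀ i : Fin n, E (w i.castSucc) (w i.succ)

/-- `N_n(f,g)`: the number of walks of length `n` from `f` to `g`. -/
noncomputable def numWalks {V : Type*} (E : V → V → Prop) (n : ℕ) (f g : V) : ℕ :=
  Nat.card {w : Fin (n + 1) → V // IsWalk E n f g w}

/-- The coverage generating function `P_{f,g}(p) = ∑ₙ N_n(f,g) pⁿ`. -/
noncomputable def covGF {V : Type*} (E : V → V → Prop) (f g : V) (p : ℝ) : ℝ :=
  ∑' n : ℕ, (numWalks E n f g : ℝ) * p ^ n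

/-- The edge relation is acyclic: no walks of positive length from a vertex to itself. -/
def Acyclic {V : Type*} (E : V → V → Prop) : Prop :=
  ∀ f : V, ∀ n : ℕ, 1 ≤ n → numWalks E n f f = 0

set_option linter.unusedSectionVars false

section Aux
variable {V : Type*} [Fintype V] {E : V → V → Prop}

instance walkFinite (n : ℕ) (f g : V) : Finite {w : Fin (n + 1) → V // IsWalk E n f g w} :=
  Subtype.finite

/-- subwalk -/
lemma isWalk_sub {n : ℕ} {f g : V} {w : Fin (n + 1) → V} (hw : IsWalk E n f g w)
    (a b : ℕ) (hab : a ≤ b) (hb : b ≤ n) :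
    IsWalk E (b - a) (w ⟨a, by omega⟩) (w ⟨b, by omega⟩)
      (fun k => w ⟨a + k.val, by have := k.isLt; omega⟩) := by
  refine ⟨by simp, ?_, ?_⟩
  · show w _ = w _
    congr 1
    simp [Fin.last]
    omega
  · intro i
    have h2 := hw.2.2 ⟨a + i.val, by have := i.isLt; omega⟩
    convert h2 using 2
    all_goals (apply Fin.ext; simp <;> omega)

lemma numWalks_pos {n : ℕ} {f g : V} (w : Fin (n + 1) → V) (hw : IsWalk E n f g w) :
    0 < numWalks E n f g := by
  have : Nonempty {w : Fin (n + 1) → V // IsWalk E n f g w} := ⟨⟨w, hw⟩⟩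
  exact Nat.card_pos

lemma numWalks_eq_zero_of_card_le (hE : Acyclic E) {n : ℕ} (hn : Fintype.card V ≤ n)
    (f g : V) : numWalks E n f g = 0 := by
  by_contra hne
  obtain ⟨⟨⟨w, hw⟩⟩, -⟩ := Nat.card_ne_zero.mp hne
  have hni : ¬ Function.Injective w := by
    intro hinj
    have := Fintype.card_le_of_injective w hinj
    simp at this
    omega
  rw [Function.not_injective_iff] at hni
  obtain ⟨i, j, hvij, hij⟩ := hni
  -- wlog i.val < j.val
  rcases lt_or_gt_of_ne (fun hv => hij (Fin.ext hv) : i.val ≠ j.val) with hlt | hlt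
  · have hs := isWalk_sub hw i.val j.val hlt.le (by have := j.isLt; omega)
    simp only [Fin.eta] at hs
    rw [← hvij] at hs
    have := numWalks_pos _ hs
    rw [hE (w i) _ (by omega)] at this
    omega
  · have hs := isWalk_sub hw j.val i.val hlt.le (by have := i.isLt; omega)
    simp only [Fin.eta] at hs
    rw [hvij] at hs
    have := numWalks_pos _ hs
    rw [hE (w j) _ (by omega)] at this
    omega

/-- glue two walks -/
def glue (N m : ℕ) (w1 : Fin (m + 1) → V) (w2 : Fin (N - m + 1) → V) : Fin (N + 1) → V :=
  fun k => if hk : k.val ≤ m then w1 ⟨k.val, by omega⟩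
    else w2 ⟨k.val - m, by have := k.isLt; omega⟩

lemma glue_isWalk {N m : ℕ} (hm : m ≤ N) {f h g : V}
    {w1 : Fin (m + 1) → V} {w2 : Fin (N - m + 1) → V}
    (h1 : IsWalk E m f h w1) (h2 : IsWalk E (N - m) h g w2) :
    IsWalk E N f g (glue N m w1 w2) := by
  obtain ⟨h10, h1l, h1e⟩ := h1
  obtain ⟨h20, h2l, h2e⟩ := h2
  refine ⟨?_, ?_, ?_⟩
  · simpa [glue] using h10
  · show glue N m w1 w2 ⟨N, by omega⟩ = g
    rcases eq_or_lt_of_le hm with rfl | hlt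
    · simp only [glue, le_refl, dif_pos]
      rw [show (⟨m, by omega⟩ : Fin (m+1)) = Fin.last m from rfl, h1l]
      have : (Fin.last (m - m)) = (0 : Fin (m - m + 1)) := by
        apply Fin.ext; simp [Fin.last]
      rw [this, h20] at h2l
      exact h2l
    · have : ¬ (N ≤ m) := by omega
      simp only [glue, this, dif_neg, not_false_iff]
      rw [show (⟨N - m, by omega⟩ : Fin (N - m + 1)) = Fin.last (N - m) from rfl]
      exact h2l
  · intro i
    rcases lt_trichotomy i.val m with hlt | heq | hgt
    · have hc : i.castSucc.val ≤ m := by simpa using hlt.le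
      have hs : i.succ.val ≤ m := by simp; omega
      simp only [glue, hc, hs, dif_pos]
      have := h1e ⟨i.val, hlt⟩
      convert this using 2
      all_goals (apply Fin.ext; simp)
    · -- boundary: i.val = m
      have hc : i.castSucc.val ≤ m := by simpa using heq.le
      have hs : ¬ i.succ.val ≤ m := by simp; omega
      simp only [glue, hc, hs, dif_pos, dif_neg, not_false_iff]
      have hw1 : w1 ⟨i.castSucc.val, by simp; omega⟩ = h := by
        rw [show (⟨i.castSucc.val, by simp; omega⟩ : Fin (m+1)) = Fin.last m from
          Fin.ext (by simp [Fin.last, heq])]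
        exact h1l
      rw [hw1]
      have := h2e ⟨0, by have := i.isLt; omega⟩
      rw [show (⟨0, by have := i.isLt; omega⟩ : Fin (N - m)).castSucc = 0 from rfl, h20] at this
      convert this using 2
      all_goals (apply Fin.ext; simp; omega)
    · have hc : ¬ i.castSucc.val ≤ m := by simp; omega
      have hs : ¬ i.succ.val ≤ m := by simp; omega
      simp only [glue, hc, hs, dif_neg, not_false_iff]
      have := h2e ⟨i.val - m, by have := i.isLt; omega⟩
      convert this using 2
      all_goals (apply Fin.ext; simp <;> omega)

end Aux

section Key
variable {V : Type*} [Fintype V] {E : V → V → Prop}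

lemma glue_left {N m : ℕ} (w1 : Fin (m + 1) → V) (w2 : Fin (N - m + 1) → V)
    (k : Fin (m + 1)) (hm : m ≤ N) :
    glue N m w1 w2 ⟨k.val, by have := k.isLt; omega⟩ = w1 k := by
  simp only [glue]
  rw [dif_pos (by have := k.isLt; omega : k.val ≤ m)]

lemma glue_right {N m : ℕ} (w1 : Fin (m + 1) → V) (w2 : Fin (N - m + 1) → V)
    (k : Fin (N - m + 1)) (hm : m ≤ N) (hk : 1 ≤ k.val) :
    glue N m w1 w2 ⟨m + k.val, by have := k.isLt; omega⟩ = w2 k := by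
  simp only [glue]
  rw [dif_neg (by omega)]
  congr 1
  apply Fin.ext
  simp

lemma no_two (hE : Acyclic E) {N : ℕ} {f g h : V} {w : Fin (N + 1) → V}
    (hw : IsWalk E N f g w) {a b : ℕ} (hab : a < b) (hb : b ≤ N)
    (ha : w ⟨a, by omega⟩ = h) (hbb : w ⟨b, by omega⟩ = h) : False := by
  have hs := isWalk_sub hw a b hab.le hb
  rw [ha, hbb] at hs
  have := numWalks_pos _ hs
  rw [hE h (b - a) (by omega)] at this
  omega

lemma key (hE : Acyclic E) (f h g : V) (N : ℕ) :
    ∑ m ∈ Finset.range (N + 1), numWalks E m f h * numWalks E (N - m) h g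
      ≤ numWalks E N f g := by
  classical
  letI inst : ∀ (n : ℕ) (a b : V), Fintype {w : Fin (n + 1) → V // IsWalk E n a b w} :=
    fun n a b => Fintype.ofFinite _
  set Φ : (Σ m : Fin (N + 1),
      ({w : Fin (m.val + 1) → V // IsWalk E m.val f h w} ×
       {w : Fin (N - m.val + 1) → V // IsWalk E (N - m.val) h g w})) →
      {w : Fin (N + 1) → V // IsWalk E N f g w} :=
    fun x => ⟨glue N x.1.val x.2.1.val x.2.2.val,
      glue_isWalk (by have := x.1.isLt; omega) x.2.1.2 x.2.2.2⟩ with hΦ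
  have hinj : Function.Injective Φ := by
    rintro ⟨m, ⟨w1, h1⟩, ⟨w2, h2⟩⟩ ⟨m', ⟨w1', h1'⟩, ⟨w2', h2'⟩⟩ heq
    have hmN : m.val ≤ N := by have := m.isLt; omega
    have hmN' : m'.val ≤ N := by have := m'.isLt; omega
    have hglue : glue N m.val w1 w2 = glue N m'.val w1' w2' :=
      congrArg Subtype.val heq
    have hc1 : glue N m.val w1 w2 ⟨m.val, by omega⟩ = h := by
      have := glue_left (N := N) w1 w2 (Fin.last m.val) hmN
      simp only [Fin.val_last] at this
      rw [this, h1.2.1]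
    have hc2 : glue N m.val w1 w2 ⟨m'.val, by omega⟩ = h := by
      rw [hglue]
      have := glue_left (N := N) w1' w2' (Fin.last m'.val) hmN'
      simp only [Fin.val_last] at this
      rw [this, h1'.2.1]
    have hwalk : IsWalk E N f g (glue N m.val w1 w2) :=
      glue_isWalk hmN h1 h2
    have hm : m.val = m'.val := by
      by_contra hne
      rcases lt_or_gt_of_ne hne with hlt | hlt
      · exact no_two hE hwalk hlt hmN' hc1 hc2
      · exact no_two hE hwalk hlt hmN hc2 hc1
    have hmm : m = m' := Fin.ext hm
    subst hmm
    have e1 : w1 = w1' := by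
      funext k
      have hk := congrFun hglue ⟨k.val, by have := k.isLt; omega⟩
      rwa [glue_left w1 w2 k hmN, glue_left w1' w2' k hmN] at hk
    have e2 : w2 = w2' := by
      funext k
      rcases Nat.eq_zero_or_pos k.val with hk0 | hk0
      · have : k = 0 := Fin.ext hk0
        rw [this, h2.1, h2'.1]
      · have hk := congrFun hglue ⟨m.val + k.val, by have := k.isLt; omega⟩
        rwa [glue_right w1 w2 k hmN hk0, glue_right w1' w2' k hmN hk0] at hk
    subst e1; subst e2
    rfl
  have hcard := Fintype.card_le_of_injective Φ hinj
  rw [Fintype.card_sigma] at hcard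
  simp only [Fintype.card_prod] at hcard
  calc ∑ m ∈ Finset.range (N + 1), numWalks E m f h * numWalks E (N - m) h g
      = ∑ m : Fin (N + 1), numWalks E m.val f h * numWalks E (N - m.val) h g :=
        (Fin.sum_univ_eq_sum_range _ _).symm
    _ ≤ numWalks E N f g := by
        simpa only [numWalks, Nat.card_eq_fintype_card] using hcard

end Key


/-- for an acyclic edge relation on a finite set,
`P_{f,g}(p) ≥ P_{f,h}(p) · P_{h,g}(p)` for all `p ∈ [0,1]`. -/
theorem stmt_2 {V : Type*} [Fintype V] (E : V → V → Prop) (hE : Acyclic E)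
    (f h g : V) (p : ℝ) (hp : p ∈ Set.Icc (0 : ℝ) 1) :
    covGF E f h p * covGF E h g p ≤ covGF E f g p := by
  obtain ⟨hp0, hp1⟩ := hp
  set C := Fintype.card V with hC
  have hzero : ∀ (a b : V) (n : ℕ), n ∉ Finset.range C →
      (numWalks E n a b : ℝ) * p ^ n = 0 := by
    intro a b n hn
    rw [numWalks_eq_zero_of_card_le hE (by simpa using hn) a b]
    simp
  have hsum : ∀ a b : V, Summable (fun n => (numWalks E n a b : ℝ) * p ^ n) :=
    fun a b => summable_of_ne_finset_zero (hzero a b)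
  have hnorm : ∀ a b : V, Summable (fun n => ‖(numWalks E n a b : ℝ) * p ^ n‖) :=
    fun a b => summable_of_ne_finset_zero
      (s := Finset.range C) (fun n hn => by rw [hzero a b n hn]; simp)
  rw [covGF, covGF, covGF,
    tsum_mul_tsum_eq_tsum_sum_antidiagonal_of_summable_norm (hnorm f h) (hnorm h g)]
  refine Summable.tsum_le_tsum ?_ ?_ (hsum f g)
  · intro N
    have hfac : ∑ x ∈ Finset.HasAntidiagonal.antidiagonal N,
        (numWalks E x.1 f h : ℝ) * p ^ x.1 * ((numWalks E x.2 h g : ℝ) * p ^ x.2)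
        = (∑ x ∈ Finset.HasAntidiagonal.antidiagonal N,
            (numWalks E x.1 f h : ℝ) * (numWalks E x.2 h g : ℝ)) * p ^ N := by
      rw [Finset.sum_mul]
      refine Finset.sum_congr rfl ?_
      intro x hx
      have hxN : x.1 + x.2 = N := Finset.HasAntidiagonal.mem_antidiagonal.mp hx
      rw [← hxN, pow_add]
      ring
    rw [hfac]
    have hle : (∑ x ∈ Finset.HasAntidiagonal.antidiagonal N,
        (numWalks E x.1 f h : ℝ) * (numWalks E x.2 h g : ℝ)) ≤ (numWalks E N f g : ℝ) := by
      have hk := key hE f h g N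
      calc (∑ x ∈ Finset.HasAntidiagonal.antidiagonal N,
            (numWalks E x.1 f h : ℝ) * (numWalks E x.2 h g : ℝ))
          = ((∑ m ∈ Finset.range (N + 1),
              numWalks E m f h * numWalks E (N - m) h g : ℕ) : ℝ) := by
            rw [Finset.Nat.sum_antidiagonal_eq_sum_range_succ_mk]
            push_cast
            rfl
        _ ≤ (numWalks E N f g : ℝ) := by exact_mod_cast hk
    exact mul_le_mul_of_nonneg_right hle (pow_nonneg hp0 N)
  · apply summable_of_ne_finset_zero (s := Finset.range (2 * C))
    intro N hN
    apply Finset.sum_eq_zero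
    intro x hx
    have hxN : x.1 + x.2 = N := Finset.HasAntidiagonal.mem_antidiagonal.mp hx
    simp only [Finset.mem_range, not_lt] at hN
    rcases le_or_gt C x.1 with hc | hc
    · rw [numWalks_eq_zero_of_card_le hE hc]; simp
    · rw [numWalks_eq_zero_of_card_le hE (show C ≤ x.2 by omega)]; simp
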